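/- There exist infinitely many pairwise non-isomorphic ℚ-algebras of the form ℚ[X,Y]/(X² + aY², XY) with a a nonzero rational; more precisely, there is an infinite set S of nonzero rationals such that for distinct a, b ∈ S the ℚ-algebras ℚ[X,Y]/(X² + aY², XY) and ℚ[X,Y]/(X² + bY², XY) are not isomorphic. -/

import Mathlib

open MvPolynomial

/-- `R a = ℚ[X,Y]/(X² + aY², XY)`. -/
noncomputable abbrev stmt4R (a : ℚ) :=
  MvPolynomial (Fin 2) ℚ ⧸
    Ideal.span ({X 0 ^ 2 + C a * X 1 ^ 2, X 0 * X 1} : Set (MvPolynomial (Fin 2) ℚ))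

set_option maxHeartbeats 1000000
set_option synthInstance.maxHeartbeats 1000000

namespace S4

noncomputable abbrev I (a : ℚ) : Ideal (MvPolynomial (Fin 2) ℚ) :=
  Ideal.span ({X 0 ^ 2 + C a * X 1 ^ 2, X 0 * X 1} : Set (MvPolynomial (Fin 2) ℚ))

noncomputable def xq (a : ℚ) : stmt4R a := Ideal.Quotient.mk (I a) (X 0)
noncomputable def yq (a : ℚ) : stmt4R a := Ideal.Quotient.mk (I a) (X 1)

lemma amap (a c : ℚ) : algebraMap ℚ (stmt4R a) c = Ideal.Quotient.mk (I a) (C c) := by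
  rw [IsScalarTower.algebraMap_apply ℚ (MvPolynomial (Fin 2) ℚ) (stmt4R a),
    MvPolynomial.algebraMap_eq]
  rfl

set_option synthInstance.maxHeartbeats 800000 in
lemma hsm (a : ℚ) (c : ℚ) (z : stmt4R a) : c • z = algebraMap ℚ (stmt4R a) c * z :=
  Algebra.smul_def c z

lemma hxy (a : ℚ) : xq a * yq a = 0 := by
  have h : (Ideal.Quotient.mk (I a)) (X 0 * X 1) = 0 :=
    Ideal.Quotient.eq_zero_iff_mem.mpr (Ideal.subset_span (by simp))
  rw [map_mul] at h
  exact h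

lemma hrel (a : ℚ) : xq a ^ 2 + algebraMap ℚ (stmt4R a) a * yq a ^ 2 = 0 := by
  have h : (Ideal.Quotient.mk (I a)) (X 0 ^ 2 + C a * X 1 ^ 2) = 0 :=
    Ideal.Quotient.eq_zero_iff_mem.mpr (Ideal.subset_span (by simp))
  simpa [xq, yq, amap, map_add, map_mul, map_pow] using h

lemma hxyy (a : ℚ) : xq a * yq a ^ 2 = 0 := by
  linear_combination yq a * hxy a

lemma hx3 (a : ℚ) : xq a ^ 3 = 0 := by
  linear_combination xq a * hrel a - algebraMap ℚ (stmt4R a) a * hxyy a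

lemma hy3 {a : ℚ} (ha : a ≠ 0) : yq a ^ 3 = 0 := by
  have h : algebraMap ℚ (stmt4R a) a * yq a ^ 3 = 0 := by
    linear_combination yq a * hrel a - xq a * hxy a
  have h2 : algebraMap ℚ (stmt4R a) (a⁻¹ * a) * yq a ^ 3 = 0 := by
    rw [map_mul, mul_assoc, h, mul_zero]
  rwa [inv_mul_cancel₀ ha, map_one, one_mul] at h2

lemma coeff_aux (f g : MvPolynomial (Fin 2) ℚ) (a c0 c1 c2 c3 : ℚ)
    (hfg : f * (X 0 ^ 2 + C a * X 1 ^ 2) + g * (X 0 * X 1)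
      = C c0 + C c1 * X 0 + C c2 * X 1 + C c3 * X 1 ^ 2) :
    c0 = 0 ∧ c1 = 0 ∧ c2 = 0 ∧ c3 = 0 := by
  have hfg2 : f * X 0 * X 0 + C a * (f * X 1) * X 1 + g * X 0 * X 1
      = C c0 + C c1 * X 0 + C c2 * X 1 + C c3 * X 1 ^ 2 := by linear_combination hfg
  have hs0 : ∀ i : Fin 2, (Finsupp.single i 2 - Finsupp.single i 1 : Fin 2 →₀ ℕ)
      = Finsupp.single i 1 := by intro i; rw [← Finsupp.single_tsub]
  have hs1 : ∀ i : Fin 2, (Finsupp.single i 1 - Finsupp.single i 1 : Fin 2 →₀ ℕ) = 0 := by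
    intro i; rw [← Finsupp.single_tsub]; simp
  have e0 := congrArg (coeff 0) hfg2
  have e1 := congrArg (coeff (Finsupp.single 0 1)) hfg2
  have e2 := congrArg (coeff (Finsupp.single 1 1)) hfg2
  have e3 := congrArg (coeff (Finsupp.single 0 2)) hfg2
  have e4 := congrArg (coeff (Finsupp.single 1 2)) hfg2
  norm_num [coeff_mul_X', coeff_C, coeff_X', X_pow_eq_monomial, coeff_monomial, hs0, hs1,
    Finsupp.single_eq_single_iff, Finsupp.mem_support_iff, Finsupp.single_apply,
    Finsupp.single_eq_zero, eq_comm] at e0 e1 e2 e3 e4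
  exact ⟨e0, e1, e2, by rw [e4, ← e3, mul_zero]⟩

lemma indep (a : ℚ) (c0 c1 c2 c3 : ℚ)
    (h : algebraMap ℚ (stmt4R a) c0 + algebraMap ℚ (stmt4R a) c1 * xq a
      + algebraMap ℚ (stmt4R a) c2 * yq a + algebraMap ℚ (stmt4R a) c3 * yq a ^ 2 = 0) :
    c0 = 0 ∧ c1 = 0 ∧ c2 = 0 ∧ c3 = 0 := by
  have h' : (Ideal.Quotient.mk (I a)) (C c0 + C c1 * X 0 + C c2 * X 1 + C c3 * X 1 ^ 2) = 0 := by
    simpa [xq, yq, amap, map_add, map_mul, map_pow] using h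
  rw [Ideal.Quotient.eq_zero_iff_mem, I, Ideal.mem_span_pair] at h'
  obtain ⟨f, g, hfg⟩ := h'
  exact coeff_aux f g a c0 c1 c2 c3 hfg

lemma linIndep (a : ℚ) : LinearIndependent ℚ ![(1 : stmt4R a), xq a, yq a, yq a ^ 2] := by
  rw [Fintype.linearIndependent_iff]
  intro g hg
  rw [Fin.sum_univ_four] at hg
  simp only [Matrix.cons_val_zero, Matrix.cons_val_one, Matrix.head_cons, Matrix.cons_val_two,
    Matrix.tail_cons, Matrix.cons_val_three, hsm a, mul_one] at hg
  have := indep a (g 0) (g 1) (g 2) (g 3) (by linear_combination hg)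
  intro i; fin_cases i <;> tauto

lemma adjoin_xy (a : ℚ) : Algebra.adjoin ℚ ({xq a, yq a} : Set (stmt4R a)) = ⊤ := by
  have hr : Set.range (X : Fin 2 → MvPolynomial (Fin 2) ℚ) = {X 0, X 1} := by
    ext p
    constructor
    · rintro ⟨i, rfl⟩; fin_cases i <;> simp
    · rintro (rfl | rfl)
      exacts [⟨0, rfl⟩, ⟨1, rfl⟩]
  have him : (Ideal.Quotient.mkₐ ℚ (I a)) '' {X 0, X 1} = {xq a, yq a} := by
    rw [Set.image_insert_eq, Set.image_singleton]; rfl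
  calc Algebra.adjoin ℚ ({xq a, yq a} : Set (stmt4R a))
      = (Algebra.adjoin ℚ (Set.range (X : Fin 2 → MvPolynomial (Fin 2) ℚ))).map
          (Ideal.Quotient.mkₐ ℚ (I a)) := by rw [AlgHom.map_adjoin, hr, him]
    _ = ⊤ := by
        rw [MvPolynomial.adjoin_range_X, Algebra.map_top, AlgHom.range_eq_top]
        exact Ideal.Quotient.mkₐ_surjective ℚ (I a)

lemma span_top {a : ℚ} (ha : a ≠ 0) :
    Submodule.span ℚ ({1, xq a, yq a, yq a ^ 2} : Set (stmt4R a)) = ⊤ := by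
  set s : Set (stmt4R a) := {1, xq a, yq a, yq a ^ 2} with hs
  set M := Submodule.span ℚ s with hM
  have m1 : (1 : stmt4R a) ∈ M := Submodule.subset_span (by simp [hs])
  have mx : xq a ∈ M := Submodule.subset_span (by simp [hs])
  have my : yq a ∈ M := Submodule.subset_span (by simp [hs])
  have my2 : yq a ^ 2 ∈ M := Submodule.subset_span (by simp [hs])
  have hxx : xq a * xq a = (-a) • yq a ^ 2 := by
    rw [hsm a, map_neg]
    linear_combination hrel a
  have hyy3 : yq a * yq a ^ 2 = 0 := by
    have := hy3 ha; linear_combination this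
  have hy2y2 : yq a ^ 2 * yq a ^ 2 = 0 := by
    have := hy3 ha; linear_combination yq a * this
  have hgen : ∀ u ∈ s, ∀ v ∈ s, u * v ∈ M := by
    intro u hu v hv
    simp only [hs, Set.mem_insert_iff, Set.mem_singleton_iff] at hu hv
    rcases hu with rfl | rfl | rfl | rfl <;> rcases hv with rfl | rfl | rfl | rfl
    · simpa using m1
    · simpa using mx
    · simpa using my
    · simpa using my2
    · simpa using mx
    · rw [hxx]; exact M.smul_mem _ my2
    · rw [hxy]; exact M.zero_mem
    · rw [hxyy]; exact M.zero_mem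
    · simpa using my
    · rw [mul_comm (yq a) (xq a), hxy]; exact M.zero_mem
    · rw [← sq]; exact my2
    · rw [hyy3]; exact M.zero_mem
    · simpa using my2
    · rw [mul_comm (yq a ^ 2) (xq a), hxyy]; exact M.zero_mem
    · rw [mul_comm (yq a ^ 2) (yq a), hyy3]; exact M.zero_mem
    · rw [hy2y2]; exact M.zero_mem
  have hmul : ∀ p ∈ M, ∀ q ∈ M, p * q ∈ M := by
    intro p hp q hq
    refine Submodule.span_induction₂ (p := fun x y _ _ => x * y ∈ M)
      (fun x y hx hy => hgen x hx y hy)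
      (fun y _ => by show (0 : stmt4R a) * y ∈ M; rw [zero_mul]; exact M.zero_mem)
      (fun x _ => by show x * (0 : stmt4R a) ∈ M; rw [mul_zero]; exact M.zero_mem)
      (fun x y z _ _ _ h1 h2 => by show (x + y) * z ∈ M; rw [add_mul]; exact M.add_mem h1 h2)
      (fun x y z _ _ _ h1 h2 => by show x * (y + z) ∈ M; rw [mul_add]; exact M.add_mem h1 h2)
      (fun r x y _ _ h => by show (r • x) * y ∈ M; rw [smul_mul_assoc]; exact M.smul_mem r h)
      (fun r x y _ _ h => by show x * (r • y) ∈ M; rw [mul_smul_comm]; exact M.smul_mem r h)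
      hp hq
  let SA : Subalgebra ℚ (stmt4R a) :=
    { carrier := M
      mul_mem' := fun hx hy => hmul _ hx _ hy
      one_mem' := m1
      add_mem' := fun hx hy => M.add_mem hx hy
      zero_mem' := M.zero_mem
      algebraMap_mem' := fun r => by
        rw [Algebra.algebraMap_eq_smul_one]; exact M.smul_mem r m1 }
  have htop : (⊤ : Subalgebra ℚ (stmt4R a)) ≤ SA := by
    rw [← adjoin_xy a]
    apply Algebra.adjoin_le
    rintro z (rfl | rfl)
    exacts [mx, my]
  rw [eq_top_iff]
  intro z _
  exact htop (Algebra.mem_top)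


lemma coords {a : ℚ} (ha : a ≠ 0) (z : stmt4R a) :
    ∃ c0 c1 c2 c3 : ℚ, z = algebraMap ℚ (stmt4R a) c0 + algebraMap ℚ (stmt4R a) c1 * xq a
      + algebraMap ℚ (stmt4R a) c2 * yq a + algebraMap ℚ (stmt4R a) c3 * yq a ^ 2 := by
  have hset : ({1, xq a, yq a, yq a ^ 2} : Set (stmt4R a))
      = Set.range ![1, xq a, yq a, yq a ^ 2] := by
    ext w
    simp only [Matrix.range_cons, Matrix.range_empty, Set.mem_insert_iff, Set.union_empty,
      Set.mem_union, Set.mem_singleton_iff, Set.singleton_union]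
  have hz : z ∈ Submodule.span ℚ (Set.range ![(1 : stmt4R a), xq a, yq a, yq a ^ 2]) := by
    rw [← hset, span_top ha]; trivial
  rw [Submodule.mem_span_range_iff_exists_fun] at hz
  obtain ⟨c, hc⟩ := hz
  refine ⟨c 0, c 1, c 2, c 3, ?_⟩
  rw [← hc, Fin.sum_univ_four]
  simp only [Matrix.cons_val_zero, Matrix.cons_val_one, Matrix.head_cons, Matrix.cons_val_two,
    Matrix.tail_cons, Matrix.cons_val_three, hsm a, mul_one]

lemma key {a b : ℚ} (ha : a ≠ 0) (hb : b ≠ 0) (e : stmt4R a ≃ₐ[ℚ] stmt4R b) :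
    ∃ D E : ℚ, D ≠ 0 ∧ a * D ^ 2 = b * E ^ 2 := by
  set u := e (xq a) with hudef
  set v := e (yq a) with hvdef
  have huv : u * v = 0 := by rw [hudef, hvdef, ← map_mul, hxy, map_zero]
  have hws : u ^ 2 + algebraMap ℚ (stmt4R b) a * v ^ 2 = 0 := by
    have h2 := congrArg e (hrel a)
    simpa [map_add, map_mul, map_pow, AlgEquiv.commutes] using h2
  have hu3 : u ^ 3 = 0 := by rw [hudef, ← map_pow, hx3, map_zero]
  have hv3 : v ^ 3 = 0 := by rw [hvdef, ← map_pow, hy3 ha, map_zero]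
  -- evaluation at the origin
  have hker : ∀ p ∈ I b, ((aeval (fun _ => (0 : ℚ)) : MvPolynomial (Fin 2) ℚ →ₐ[ℚ] ℚ) :
      MvPolynomial (Fin 2) ℚ →+* ℚ) p = 0 := by
    intro p hp
    rw [Ideal.mem_span_pair] at hp
    obtain ⟨f, g, hfg⟩ := hp
    rw [← hfg]
    simp
  set ε : stmt4R b →+* ℚ := Ideal.Quotient.lift (I b)
    ((aeval (fun _ => (0 : ℚ)) : MvPolynomial (Fin 2) ℚ →ₐ[ℚ] ℚ) : MvPolynomial (Fin 2) ℚ →+* ℚ)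
    hker with hεdef
  have εx : ε (xq b) = 0 := by rw [xq, hεdef, Ideal.Quotient.lift_mk]; simp
  have εy : ε (yq b) = 0 := by rw [yq, hεdef, Ideal.Quotient.lift_mk]; simp
  have εc : ∀ c : ℚ, ε (algebraMap ℚ (stmt4R b) c) = c := by
    intro c; rw [amap, hεdef, Ideal.Quotient.lift_mk]; simp
  obtain ⟨c0, α, β, γ, hu⟩ := coords hb u
  obtain ⟨d0, α', β', γ', hv⟩ := coords hb v
  have hc0 : c0 = 0 := by
    have h1 : ε u = c0 := by
      rw [hu]; simp [map_add, map_mul, map_pow, εx, εy, εc]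
    have h2 : (ε u) ^ 3 = 0 := by rw [← map_pow, hu3, map_zero]
    rw [h1] at h2
    exact pow_eq_zero_iff (by norm_num) |>.mp h2
  have hd0 : d0 = 0 := by
    have h1 : ε v = d0 := by
      rw [hv]; simp [map_add, map_mul, map_pow, εx, εy, εc]
    have h2 : (ε v) ^ 3 = 0 := by rw [← map_pow, hv3, map_zero]
    rw [h1] at h2
    exact pow_eq_zero_iff (by norm_num) |>.mp h2
  rw [hc0, map_zero, zero_add] at hu
  rw [hd0, map_zero, zero_add] at hv
  -- coefficient identities
  have hA : β * β' - b * (α * α') = 0 := by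
    refine (indep b 0 0 0 (β * β' - b * (α * α')) ?_).2.2.2
    simp only [map_zero, zero_add, zero_mul, map_sub, map_mul]
    have h := huv
    rw [hu, hv] at h
    linear_combination h
      - (algebraMap ℚ (stmt4R b) α * algebraMap ℚ (stmt4R b) α') * hrel b
      - (algebraMap ℚ (stmt4R b) α * algebraMap ℚ (stmt4R b) β'
        + algebraMap ℚ (stmt4R b) α' * algebraMap ℚ (stmt4R b) β) * hxy b
      - (algebraMap ℚ (stmt4R b) α * algebraMap ℚ (stmt4R b) γ'
        + algebraMap ℚ (stmt4R b) α' * algebraMap ℚ (stmt4R b) γ) * hxyy b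
      - (algebraMap ℚ (stmt4R b) β * algebraMap ℚ (stmt4R b) γ'
        + algebraMap ℚ (stmt4R b) β' * algebraMap ℚ (stmt4R b) γ
        + algebraMap ℚ (stmt4R b) γ * algebraMap ℚ (stmt4R b) γ' * yq b) * (hy3 hb)
  have hB : (β ^ 2 - b * α ^ 2) + a * (β' ^ 2 - b * α' ^ 2) = 0 := by
    refine (indep b 0 0 0 ((β ^ 2 - b * α ^ 2) + a * (β' ^ 2 - b * α' ^ 2)) ?_).2.2.2
    simp only [map_zero, zero_add, zero_mul, map_sub, map_mul, map_add, map_pow]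
    have h := hws
    rw [hu, hv] at h
    linear_combination h
      - (algebraMap ℚ (stmt4R b) α ^ 2
        + algebraMap ℚ (stmt4R b) a * algebraMap ℚ (stmt4R b) α' ^ 2) * hrel b
      - (2 * (algebraMap ℚ (stmt4R b) α * algebraMap ℚ (stmt4R b) β
        + algebraMap ℚ (stmt4R b) a * algebraMap ℚ (stmt4R b) α' * algebraMap ℚ (stmt4R b) β'))
        * hxy b
      - (2 * (algebraMap ℚ (stmt4R b) α * algebraMap ℚ (stmt4R b) γ
        + algebraMap ℚ (stmt4R b) a * algebraMap ℚ (stmt4R b) α' * algebraMap ℚ (stmt4R b) γ'))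
        * hxyy b
      - (2 * (algebraMap ℚ (stmt4R b) β * algebraMap ℚ (stmt4R b) γ
        + algebraMap ℚ (stmt4R b) a * algebraMap ℚ (stmt4R b) β' * algebraMap ℚ (stmt4R b) γ')
        + (algebraMap ℚ (stmt4R b) γ ^ 2
        + algebraMap ℚ (stmt4R b) a * algebraMap ℚ (stmt4R b) γ' ^ 2) * yq b) * (hy3 hb)
  -- nondegeneracy
  have hD : β' ^ 2 - b * α' ^ 2 ≠ 0 := by
    intro hD0
    -- then u² = v² = uv = 0, contradiction with dimension
    have hv2 : v ^ 2 = 0 := by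
      have hv2' : v ^ 2 = algebraMap ℚ (stmt4R b) (β' ^ 2 - b * α' ^ 2) * yq b ^ 2 := by
        rw [hv]
        simp only [map_sub, map_mul, map_pow]
        linear_combination (algebraMap ℚ (stmt4R b) α' ^ 2) * hrel b
          + (2 * algebraMap ℚ (stmt4R b) α' * algebraMap ℚ (stmt4R b) β') * hxy b
          + (2 * algebraMap ℚ (stmt4R b) α' * algebraMap ℚ (stmt4R b) γ') * hxyy b
          + (2 * algebraMap ℚ (stmt4R b) β' * algebraMap ℚ (stmt4R b) γ'
            + algebraMap ℚ (stmt4R b) γ' ^ 2 * yq b) * (hy3 hb)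
      rw [hv2', hD0, map_zero, zero_mul]
    have hu2 : u ^ 2 = 0 := by
      have hu2' : u ^ 2 = algebraMap ℚ (stmt4R b) (β ^ 2 - b * α ^ 2) * yq b ^ 2 := by
        rw [hu]
        simp only [map_sub, map_mul, map_pow]
        linear_combination (algebraMap ℚ (stmt4R b) α ^ 2) * hrel b
          + (2 * algebraMap ℚ (stmt4R b) α * algebraMap ℚ (stmt4R b) β) * hxy b
          + (2 * algebraMap ℚ (stmt4R b) α * algebraMap ℚ (stmt4R b) γ) * hxyy b
          + (2 * algebraMap ℚ (stmt4R b) β * algebraMap ℚ (stmt4R b) γ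
            + algebraMap ℚ (stmt4R b) γ ^ 2 * yq b) * (hy3 hb)
      have hz : β ^ 2 - b * α ^ 2 = 0 := by
        rw [hD0] at hB; linarith
      rw [hu2', hz, map_zero, zero_mul]
    -- adjoin {u,v} = ⊤
    have hadj : Algebra.adjoin ℚ ({u, v} : Set (stmt4R b)) = ⊤ := by
      have him : (e : stmt4R a →ₐ[ℚ] stmt4R b) '' {xq a, yq a} = {u, v} := by
        rw [Set.image_insert_eq, Set.image_singleton]; rfl
      calc Algebra.adjoin ℚ ({u, v} : Set (stmt4R b))
          = (Algebra.adjoin ℚ ({xq a, yq a} : Set (stmt4R a))).map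
            (e : stmt4R a →ₐ[ℚ] stmt4R b) := by rw [AlgHom.map_adjoin, him]
        _ = ⊤ := by
            rw [adjoin_xy a, Algebra.map_top, AlgHom.range_eq_top]
            exact e.surjective
    -- span {1,u,v} = ⊤
    have hspan3 : Submodule.span ℚ ({1, u, v} : Set (stmt4R b)) = ⊤ := by
      set t : Set (stmt4R b) := {1, u, v} with ht
      set N := Submodule.span ℚ t with hN
      have n1 : (1 : stmt4R b) ∈ N := Submodule.subset_span (by simp [ht])
      have nu : u ∈ N := Submodule.subset_span (by simp [ht])
      have nv : v ∈ N := Submodule.subset_span (by simp [ht])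
      have huu : u * u = 0 := by rw [← sq]; exact hu2
      have hvv : v * v = 0 := by rw [← sq]; exact hv2
      have hgen : ∀ x ∈ t, ∀ y ∈ t, x * y ∈ N := by
        intro x hx y hy
        simp only [ht, Set.mem_insert_iff, Set.mem_singleton_iff] at hx hy
        rcases hx with rfl | rfl | rfl <;> rcases hy with rfl | rfl | rfl
        · simpa using n1
        · simpa using nu
        · simpa using nv
        · simpa using nu
        · rw [huu]; exact N.zero_mem
        · rw [huv]; exact N.zero_mem
        · simpa using nv
        · rw [mul_comm v u, huv]; exact N.zero_mem
        · rw [hvv]; exact N.zero_mem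
      have hmul : ∀ p ∈ N, ∀ q ∈ N, p * q ∈ N := by
        intro p hp q hq
        refine Submodule.span_induction₂ (p := fun x y _ _ => x * y ∈ N)
          (fun x y hx hy => hgen x hx y hy)
          (fun y _ => by show (0 : stmt4R b) * y ∈ N; rw [zero_mul]; exact N.zero_mem)
          (fun x _ => by show x * (0 : stmt4R b) ∈ N; rw [mul_zero]; exact N.zero_mem)
          (fun x y z _ _ _ h1 h2 => by
            show (x + y) * z ∈ N; rw [add_mul]; exact N.add_mem h1 h2)
          (fun x y z _ _ _ h1 h2 => by
            show x * (y + z) ∈ N; rw [mul_add]; exact N.add_mem h1 h2)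
          (fun r x y _ _ h => by
            show (r • x) * y ∈ N; rw [smul_mul_assoc]; exact N.smul_mem r h)
          (fun r x y _ _ h => by
            show x * (r • y) ∈ N; rw [mul_smul_comm]; exact N.smul_mem r h)
          hp hq
      let SB : Subalgebra ℚ (stmt4R b) :=
        { carrier := N
          mul_mem' := fun hx hy => hmul _ hx _ hy
          one_mem' := n1
          add_mem' := fun hx hy => N.add_mem hx hy
          zero_mem' := N.zero_mem
          algebraMap_mem' := fun r => by
            rw [Algebra.algebraMap_eq_smul_one]; exact N.smul_mem r n1 }
      have htop : (⊤ : Subalgebra ℚ (stmt4R b)) ≤ SB := by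
        rw [← hadj]
        apply Algebra.adjoin_le
        rintro z (rfl | rfl)
        exacts [nu, nv]
      rw [eq_top_iff]
      intro z _
      exact htop Algebra.mem_top
    -- dimension contradiction
    haveI : Module.Finite ℚ (stmt4R b) :=
      ⟨Submodule.fg_def.mpr ⟨_, Set.toFinite ({1, xq b, yq b, yq b ^ 2} : Set (stmt4R b)),
        span_top hb⟩⟩
    have h4 : 4 ≤ Module.finrank ℚ (stmt4R b) := by
      simpa using (linIndep b).fintype_card_le_finrank
    have hset3 : Set.range ![(1 : stmt4R b), u, v] = {1, u, v} := by
      ext w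
      simp only [Matrix.range_cons, Matrix.range_empty, Set.mem_insert_iff, Set.union_empty,
        Set.mem_union, Set.mem_singleton_iff, Set.singleton_union]
    have h3 : Module.finrank ℚ (stmt4R b) ≤ 3 := by
      have hle := finrank_range_le_card (R := ℚ) ![(1 : stmt4R b), u, v]
      rw [Set.finrank, hset3, hspan3, finrank_top] at hle
      simpa using hle
    omega
  refine ⟨β' ^ 2 - b * α' ^ 2, β * α' - α * β', hD, ?_⟩
  linear_combination (β' ^ 2 - b * α' ^ 2) * hB - (β * β' - b * (α * α')) * hA

end S4

/-- There is an infinite set `S` of nonzero rationals such that for distinct `a, b ∈ S`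
the `ℚ`-algebras `ℚ[X,Y]/(X² + aY², XY)` and `ℚ[X,Y]/(X² + bY², XY)` are not isomorphic. -/
theorem stmt_4 :
    ∃ S : Set ℚ, S.Infinite ∧ (∀ a ∈ S, a ≠ 0) ∧
      ∀ a ∈ S, ∀ b ∈ S, a ≠ b → IsEmpty (stmt4R a ≃ₐ[ℚ] stmt4R b) := by
  refine ⟨(fun n : ℕ => (n : ℚ)) '' {p | p.Prime}, ?_, ?_, ?_⟩
  · exact Set.Infinite.image (fun x _ y _ h => Nat.cast_injective h) Nat.infinite_setOf_prime
  · rintro a ⟨p, hp, rfl⟩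
    show (p : ℚ) ≠ 0
    exact_mod_cast hp.pos.ne'
  · rintro a ⟨p, hp, rfl⟩ b ⟨q, hq, rfl⟩ hab
    dsimp only at hab ⊢
    constructor
    intro e
    have hp0 : ((p : ℚ)) ≠ 0 := by exact_mod_cast hp.pos.ne'
    have hq0 : ((q : ℚ)) ≠ 0 := by exact_mod_cast hq.pos.ne'
    obtain ⟨D, E, hD, hkey⟩ := S4.key hp0 hq0 e
    have hpq : p ≠ q := fun h => hab (by rw [h])
    have hsq : IsSquare ((p * q : ℕ) : ℚ) := by
      refine ⟨(q : ℚ) * E / D, ?_⟩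
      push_cast
      field_simp
      linear_combination hkey
    rw [Rat.isSquare_natCast_iff] at hsq
    obtain ⟨k, hk⟩ := hsq
    have hdvd : p ∣ k * k := ⟨q, hk.symm⟩
    have hpk : p ∣ k := (Nat.Prime.dvd_mul hp).mp hdvd |>.elim id id
    obtain ⟨c, rfl⟩ := hpk
    have hq' : q = p * (c * c) := by
      have h2 : p * q = p * (p * (c * c)) := by rw [hk]; ring
      exact Nat.eq_of_mul_eq_mul_left hp.pos h2
    exact hpq ((Nat.prime_dvd_prime_iff_eq hp hq).mp ⟨c * c, hq'⟩)
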